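/- arXiv:1903.04002 — 4 statements merged into one kernel-verified Lean document; each statement's English description precedes it below -/
import Mathlib

section
/- Let V be a two-dimensional vector space over a field k with basis {a1, a2}. Define a bilinear multiplication μ by μ(a1,a1) = a1 and μ(ai,aj) = a2 for all (i,j) ≠ (1,1), and a linear map α1 by α1(a1) = a1 - a2, α1(a2) = 0. Then (V, μ, α1) is a Hom-associative algebra, i.e., α1(μ(x,y)) = μ(α1(x), α1(y)) and μ(α1(x), μ(y,z)) = μ(μ(x,y), α1(z)) for all x, y, z in V. -/
/-- The two-dimensional example `(V, μ, α1)` with `μ(a1,a1)=a1`, `μ(ai,aj)=a2` otherwise,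
`α1(a1)=a1-a2`, `α1(a2)=0`, is a Hom-associative algebra. -/
theorem hom_associative_example (k : Type*) [Field k]
    (μ : (k × k) →ₗ[k] (k × k) →ₗ[k] (k × k)) (α1 : (k × k) →ₗ[k] (k × k))
    (a1 a2 : k × k) (ha1 : a1 = (1, 0)) (ha2 : a2 = (0, 1))
    (h11 : μ a1 a1 = a1) (h12 : μ a1 a2 = a2)
    (h21 : μ a2 a1 = a2) (h22 : μ a2 a2 = a2)
    (hα1 : α1 a1 = a1 - a2) (hα2 : α1 a2 = 0) :
    (∀ x y : k × k, α1 (μ x y) = μ (α1 x) (α1 y)) ∧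
    (∀ x y z : k × k, μ (α1 x) (μ y z) = μ (μ x y) (α1 z)) := by
  have hx : ∀ x : k × k, x = x.1 • a1 + x.2 • a2 := by
    intro x
    simp [ha1, ha2, Prod.ext_iff]
  constructor
  · intro x y
    rw [hx x, hx y]
    simp only [map_add, map_smul, map_sub, map_zero, LinearMap.add_apply,
      LinearMap.smul_apply, LinearMap.sub_apply, LinearMap.zero_apply,
      h11, h12, h21, h22, hα1, hα2, smul_zero, smul_sub]
    module
  · intro x y z
    rw [hx x, hx y, hx z]
    simp only [map_add, map_smul, map_sub, map_zero, LinearMap.add_apply,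
      LinearMap.smul_apply, LinearMap.sub_apply, LinearMap.zero_apply,
      h11, h12, h21, h22, hα1, hα2, smul_zero, smul_sub]
    module
end

section
/- Let (L, [.,.]) be a Lie algebra with a derivation-compatible structure: suppose d : L → L is linear with d[x,y] = [dx,y] + [x,dy] and d∘d = 0, and α : L → L is a Lie algebra endomorphism (α[x,y] = [α(x),α(y)]) with α∘d = d∘α. Define a new bracket [x,y]_{d,α} := [α(x), d(α(y))]. Then (L, [.,.]_{d,α}, α) is a Hom-Leibniz algebra, i.e., [α(x),[y,z]_{d,α}]_{d,α} = [[x,y]_{d,α}, α(z)]_{d,α} − [[x,z]_{d,α}, α(y)]_{d,α} for all x,y,z in L. -/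
/-- If `(L,[.,.])` is a Lie algebra, `d` a differential (derivation with `d² = 0`),
and `α` a Lie endomorphism commuting with `d`, then the bracket
`[x,y]_{d,α} = [α(x), d(α(y))]` makes `L` a Hom-Leibniz algebra. -/
theorem diff_lie_homLeibniz (k L : Type*) [Field k] [AddCommGroup L] [Module k L]
    (br : L →ₗ[k] L →ₗ[k] L) (d : L →ₗ[k] L) (α : L →ₗ[k] L)
    (hskew : ∀ x y : L, br x y = - br y x)
    (hjac : ∀ x y z : L, br (br x y) z + br (br y z) x + br (br z x) y = 0)
    (hd : ∀ x y : L, d (br x y) = br (d x) y + br x (d y))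
    (hd2 : ∀ x : L, d (d x) = 0)
    (hα : ∀ x y : L, α (br x y) = br (α x) (α y))
    (hαd : ∀ x : L, α (d x) = d (α x))
    (b : L → L → L) (hb : ∀ x y : L, b x y = br (α x) (d (α y))) :
    ∀ x y z : L, b (α x) (b y z) = b (b x y) (α z) - b (b x z) (α y) := by
  intro x y z
  simp only [hb, hα, hαd, hd, hd2, map_zero, add_zero]
  set X := α (α x)
  set Y := α (α y)
  set Z := α (α z)
  have h1 := hjac X (d Y) (d Z)
  rw [hskew (d Z) X] at h1
  simp only [map_neg, LinearMap.neg_apply] at h1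
  have h3 : br (br X (d Y)) (d Z) - br (br X (d Z)) (d Y)
      + br (br (d Y) (d Z)) X = 0 := by rw [← h1]; abel
  rw [hskew X (br (d Y) (d Z))]
  exact (eq_neg_of_add_eq_zero_left h3).symm
end

section
/- Let (L, [.,.], α) be a Hom-Leibniz algebra and (R, ·, α1) a Hom-Zinbiel algebra. On the tensor product L ⊗ R define the bracket [x⊗r, y⊗s] := [x,y]⊗(r·s) − [y,x]⊗(s·r) and the linear map α⊗α1. Then (L⊗R, [.,.], α⊗α1) is a Hom-Lie algebra: the bracket is skew-symmetric and satisfies the Hom-Jacobi identity. -/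
open scoped TensorProduct

/-- The tensor product of a Hom-Leibniz algebra with a Hom-Zinbiel algebra, with bracket
`[x⊗r, y⊗s] = [x,y]⊗(r·s) − [y,x]⊗(s·r)` and structure map `α ⊗ α1`, is a Hom-Lie algebra. -/
theorem homLeibniz_tensor_homZinbiel (k L R : Type*) [Field k]
    [AddCommGroup L] [Module k L] [AddCommGroup R] [Module k R]
    (br : L →ₗ[k] L →ₗ[k] L) (α : L →ₗ[k] L)
    (hleib : ∀ x y z : L, br (α x) (br y z) = br (br x y) (α z) - br (br x z) (α y))
    (mul : R →ₗ[k] R →ₗ[k] R) (α1 : R →ₗ[k] R)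
    (hzin : ∀ r s t : R, mul (mul r s) (α1 t) = mul (α1 r) (mul s t) + mul (α1 r) (mul t s))
    (B : (L ⊗[k] R) →ₗ[k] (L ⊗[k] R) →ₗ[k] (L ⊗[k] R))
    (hB : ∀ (x y : L) (r s : R),
      B (x ⊗ₜ r) (y ⊗ₜ s) = br x y ⊗ₜ mul r s - br y x ⊗ₜ mul s r) :
    (∀ u v : L ⊗[k] R, B u v = - B v u) ∧
    (∀ u v w : L ⊗[k] R,
      B (B u v) (TensorProduct.map α α1 w) + B (B v w) (TensorProduct.map α α1 u) +
        B (B w u) (TensorProduct.map α α1 v) = 0) := by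
  constructor
  · intro u v
    induction u using TensorProduct.induction_on with
    | zero => simp
    | tmul x r =>
      induction v using TensorProduct.induction_on with
      | zero => simp
      | tmul y s => rw [hB, hB, neg_sub]
      | add v₁ v₂ h1 h2 => simp only [map_add, LinearMap.add_apply, h1, h2, neg_add]
    | add u₁ u₂ h1 h2 =>
      simp only [map_add, LinearMap.add_apply, h1, h2, neg_add]
  · have key : ∀ (x y z : L) (r s t : R),
        B (B (x ⊗ₜ r) (y ⊗ₜ s)) (TensorProduct.map α α1 (z ⊗ₜ t)) +
          B (B (y ⊗ₜ s) (z ⊗ₜ t)) (TensorProduct.map α α1 (x ⊗ₜ r)) +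
          B (B (z ⊗ₜ t) (x ⊗ₜ r)) (TensorProduct.map α α1 (y ⊗ₜ s)) = 0 := by
      intro x y z r s t
      simp only [TensorProduct.map_tmul, hB, map_sub, LinearMap.sub_apply, hleib, hzin,
        TensorProduct.tmul_sub, TensorProduct.sub_tmul, TensorProduct.tmul_add,
        TensorProduct.add_tmul]
      abel
    have aux : ∀ {a b c d e f : L ⊗[k] R},
        a + c + e = 0 → b + d + f = 0 → a + b + (c + d) + (e + f) = 0 := by
      intro a b c d e f h1 h2
      have h : a + b + (c + d) + (e + f) = (a + c + e) + (b + d + f) := by abel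
      rw [h, h1, h2, add_zero]
    intro u v w
    induction u using TensorProduct.induction_on with
    | zero => simp
    | tmul x r =>
      induction v using TensorProduct.induction_on with
      | zero => simp
      | tmul y s =>
        induction w using TensorProduct.induction_on with
        | zero => simp
        | tmul z t => exact key x y z r s t
        | add w₁ w₂ h1 h2 =>
          simp only [map_add, LinearMap.add_apply]
          exact aux h1 h2
      | add v₁ v₂ h1 h2 =>
        simp only [map_add, LinearMap.add_apply]
        exact aux h1 h2
    | add u₁ u₂ h1 h2 =>
      simp only [map_add, LinearMap.add_apply]
      exact aux h1 h2
end

section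
/- Let (R, ·, α1) be a Hom-Zinbiel algebra. Define x ∗ y := x·y + y·x. Then (R, ∗, α1) is a Hom-associative and commutative algebra: x ∗ y = y ∗ x and α1(x) ∗ (y ∗ z) = (x ∗ y) ∗ α1(z) for all x, y, z in R. -/
/-- The symmetrization `x ∗ y = x·y + y·x` of a Hom-Zinbiel product is
Hom-associative and commutative. -/
theorem homZinbiel_symmetrization (k R : Type*) [Field k] [AddCommGroup R] [Module k R]
    (mul : R →ₗ[k] R →ₗ[k] R) (α1 : R →ₗ[k] R)
    (hzin : ∀ x y z : R, mul (mul x y) (α1 z) = mul (α1 x) (mul y z) + mul (α1 x) (mul z y))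
    (star : R → R → R) (hstar : ∀ x y : R, star x y = mul x y + mul y x) :
    (∀ x y : R, star x y = star y x) ∧
    (∀ x y z : R, star (α1 x) (star y z) = star (star x y) (α1 z)) := by
  constructor
  · intro x y; rw [hstar, hstar, add_comm]
  · intro x y z
    simp only [hstar, map_add, LinearMap.add_apply]
    rw [hzin x y z, hzin y z x, hzin z y x, hzin y x z]
    abel
end
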